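/- Let p_1, p_2, q_1, q_2 ∈ ℝ² satisfy p_1 ≠ q_1, p_2 ≠ q_2, p_1 ≠ q_2, and p_2 ≠ q_1. Suppose L is a line that is simultaneously the perpendicular bisector of the segment [p_1, q_1] and of the segment [p_2, q_2], and L' is a line that is simultaneously the perpendicular bisector of the segment [p_1, q_2] and of the segment [p_2, q_1]. If L is perpendicular to L' and they intersect at the point O, then p_1 + p_2 = q_1 + q_2 = 2·O; that is, O is the common midpoint of the segments [p_1, p_2] and [q_1, q_2]. -/

import Mathlib

noncomputable section

/-- The Euclidean plane ℝ². -/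
abbrev Plane := EuclideanSpace ℝ (Fin 2)

private lemma dist_coord_iff (x p q : Plane) :
    dist x p = dist x q ↔
      (x 0 - p 0)^2 + (x 1 - p 1)^2 = (x 0 - q 0)^2 + (x 1 - q 1)^2 := by
  rw [EuclideanSpace.dist_eq, EuclideanSpace.dist_eq, Fin.sum_univ_two, Fin.sum_univ_two]
  simp only [Real.dist_eq, sq_abs]
  exact Real.sqrt_inj (by positivity) (by positivity)

private lemma sq_sum_zero {u v : ℝ} (h : u^2 + v^2 = 0) : u = 0 ∧ v = 0 := by
  constructor <;> nlinarith [sq_nonneg u, sq_nonneg v]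

private lemma plane_key {a b c d e f x y : ℝ}
    (hu : a^2 + b^2 ≠ 0) (hw : c^2 + d^2 ≠ 0)
    (hp : a*c + b*d = 0)
    (h4 : a*(d - f) = b*(c - e))
    (h5 : c*(b - f) = d*(a - e))
    (h6 : 2*x*a + 2*y*b = a^2 + b^2)
    (h7 : 2*x*c + 2*y*d = c^2 + d^2) :
    e = a + c ∧ f = b + d ∧ 2*x = a + c ∧ 2*y = b + d := by
  have hD : a*d - b*c ≠ 0 := by
    intro h0
    have h1 : (a^2 + b^2) * (c^2 + d^2) = (a*d - b*c)^2 + (a*c + b*d)^2 := by ring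
    apply mul_ne_zero hu hw
    rw [h1, h0, hp]; ring
  refine ⟨?_, ?_, ?_, ?_⟩
  · apply mul_left_cancel₀ hD
    linear_combination a*h5 - c*h4
  · apply mul_left_cancel₀ hD
    linear_combination b*h5 - d*h4
  · apply mul_left_cancel₀ hD
    linear_combination d*h6 - b*h7 + (b - d)*hp
  · apply mul_left_cancel₀ hD
    linear_combination a*h7 - c*h6 + (c - a)*hp

/-- **Rectangle midpoint fact of Appendix B.** Suppose the perpendicular bisector of
`[p₁, q₁]` coincides (as a set of points, characterized by equal distances) with the
perpendicular bisector of `[p₂, q₂]`, giving a line `L`, and the perpendicular bisector of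
`[p₁, q₂]` coincides with that of `[p₂, q₁]`, giving a line `L'`. If `L ⟂ L'` (their normal
directions `q₁ - p₁` and `q₂ - p₁` are perpendicular) and `O` lies on both lines, then
`p₁ + p₂ = q₁ + q₂ = 2 • O`, i.e. `O` is the common midpoint of `[p₁, p₂]` and `[q₁, q₂]`. -/
theorem perpendicular_bisectors_midpoint (p₁ p₂ q₁ q₂ O : Plane)
    (h₁₁ : p₁ ≠ q₁) (h₂₂ : p₂ ≠ q₂) (h₁₂ : p₁ ≠ q₂) (h₂₁ : p₂ ≠ q₁)
    (hL : ∀ x : Plane, dist x p₁ = dist x q₁ ↔ dist x p₂ = dist x q₂)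
    (hL' : ∀ x : Plane, dist x p₁ = dist x q₂ ↔ dist x p₂ = dist x q₁)
    (hperp : (inner ℝ (q₁ - p₁) (q₂ - p₁) : ℝ) = 0)
    (hO_L : dist O p₁ = dist O q₁)
    (hO_L' : dist O p₁ = dist O q₂) :
    p₁ + p₂ = (2 : ℝ) • O ∧ q₁ + q₂ = (2 : ℝ) • O := by
  have e2 : dist O p₂ = dist O q₂ := (hL O).mp hO_L
  have e2' : dist O p₂ = dist O q₁ := (hL' O).mp hO_L'
  have hO1 := (dist_coord_iff O p₁ q₁).mp hO_L
  have hO2 := (dist_coord_iff O p₁ q₂).mp hO_L'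
  have hE2 := (dist_coord_iff O p₂ q₂).mp e2
  have hE2' := (dist_coord_iff O p₂ q₁).mp e2'
  -- nondegeneracy
  have hu : (q₁ 0 - p₁ 0)^2 + (q₁ 1 - p₁ 1)^2 ≠ 0 := by
    intro h0
    apply h₁₁
    apply PiLp.ext
    intro i
    obtain ⟨ha0, hb0⟩ := sq_sum_zero h0
    fin_cases i
    · show p₁ 0 = q₁ 0; linarith
    · show p₁ 1 = q₁ 1; linarith
  have hw : (q₂ 0 - p₁ 0)^2 + (q₂ 1 - p₁ 1)^2 ≠ 0 := by
    intro h0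
    apply h₁₂
    apply PiLp.ext
    intro i
    obtain ⟨ha0, hb0⟩ := sq_sum_zero h0
    fin_cases i
    · show p₁ 0 = q₂ 0; linarith
    · show p₁ 1 = q₂ 1; linarith
  -- perpendicularity in coordinates
  have hperp' : (q₁ 0 - p₁ 0)*(q₂ 0 - p₁ 0) + (q₁ 1 - p₁ 1)*(q₂ 1 - p₁ 1) = 0 := by
    have hi : (inner ℝ (q₁ - p₁) (q₂ - p₁) : ℝ)
        = (q₁ 0 - p₁ 0)*(q₂ 0 - p₁ 0) + (q₁ 1 - p₁ 1)*(q₂ 1 - p₁ 1) := by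
      rw [PiLp.inner_apply, Fin.sum_univ_two]
      simp [RCLike.inner_apply, mul_comm]
    rw [hi] at hperp
    exact hperp
  -- plug the point O + (-(q₁ 1 - p₁ 1), q₁ 0 - p₁ 0) into hL
  have h4 : (q₁ 0 - p₁ 0)*((q₂ 1 - p₁ 1) - (p₂ 1 - p₁ 1))
      = (q₁ 1 - p₁ 1)*((q₂ 0 - p₁ 0) - (p₂ 0 - p₁ 0)) := by
    let z : Plane := O + (show Plane from WithLp.toLp 2 ![-(q₁ 1 - p₁ 1), q₁ 0 - p₁ 0])
    have hz0 : z 0 = O 0 - (q₁ 1 - p₁ 1) := by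
      show O 0 + (![-(q₁ 1 - p₁ 1), q₁ 0 - p₁ 0] : Fin 2 → ℝ) 0 = _
      simp; ring
    have hz1 : z 1 = O 1 + (q₁ 0 - p₁ 0) := by
      show O 1 + (![-(q₁ 1 - p₁ 1), q₁ 0 - p₁ 0] : Fin 2 → ℝ) 1 = _
      simp
    have hzL : dist z p₁ = dist z q₁ := by
      rw [dist_coord_iff, hz0, hz1]
      linear_combination hO1
    have hzR := (dist_coord_iff z p₂ q₂).mp ((hL z).mp hzL)
    rw [hz0, hz1] at hzR
    linear_combination (hzR - hE2)/2
  -- plug the point O + (-(q₂ 1 - p₁ 1), q₂ 0 - p₁ 0) into hL'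
  have h5 : (q₂ 0 - p₁ 0)*((q₁ 1 - p₁ 1) - (p₂ 1 - p₁ 1))
      = (q₂ 1 - p₁ 1)*((q₁ 0 - p₁ 0) - (p₂ 0 - p₁ 0)) := by
    let z : Plane := O + (show Plane from WithLp.toLp 2 ![-(q₂ 1 - p₁ 1), q₂ 0 - p₁ 0])
    have hz0 : z 0 = O 0 - (q₂ 1 - p₁ 1) := by
      show O 0 + (![-(q₂ 1 - p₁ 1), q₂ 0 - p₁ 0] : Fin 2 → ℝ) 0 = _
      simp; ring
    have hz1 : z 1 = O 1 + (q₂ 0 - p₁ 0) := by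
      show O 1 + (![-(q₂ 1 - p₁ 1), q₂ 0 - p₁ 0] : Fin 2 → ℝ) 1 = _
      simp
    have hzL : dist z p₁ = dist z q₂ := by
      rw [dist_coord_iff, hz0, hz1]
      linear_combination hO2
    have hzR := (dist_coord_iff z p₂ q₁).mp ((hL' z).mp hzL)
    rw [hz0, hz1] at hzR
    linear_combination (hzR - hE2')/2
  have h6 : 2*(O 0 - p₁ 0)*(q₁ 0 - p₁ 0) + 2*(O 1 - p₁ 1)*(q₁ 1 - p₁ 1)
      = (q₁ 0 - p₁ 0)^2 + (q₁ 1 - p₁ 1)^2 := by linear_combination hO1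
  have h7 : 2*(O 0 - p₁ 0)*(q₂ 0 - p₁ 0) + 2*(O 1 - p₁ 1)*(q₂ 1 - p₁ 1)
      = (q₂ 0 - p₁ 0)^2 + (q₂ 1 - p₁ 1)^2 := by linear_combination hO2
  obtain ⟨k1, k2, k3, k4⟩ := plane_key hu hw hperp' h4 h5 h6 h7
  have hsm : ∀ i : Fin 2, ((2 : ℝ) • O) i = 2 * O i := fun i => rfl
  constructor
  · apply PiLp.ext
    intro i
    fin_cases i
    · show (p₁ + p₂) 0 = ((2:ℝ) • O) 0
      show p₁ 0 + p₂ 0 = _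
      rw [hsm 0]; linarith
    · show (p₁ + p₂) 1 = ((2:ℝ) • O) 1
      show p₁ 1 + p₂ 1 = _
      rw [hsm 1]; linarith
  · apply PiLp.ext
    intro i
    fin_cases i
    · show (q₁ + q₂) 0 = ((2:ℝ) • O) 0
      show q₁ 0 + q₂ 0 = _
      rw [hsm 0]; linarith
    · show (q₁ + q₂) 1 = ((2:ℝ) • O) 1
      show q₁ 1 + q₂ 1 = _
      rw [hsm 1]; linarith
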